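/- Let H̄ > 0 and let ū ∈ C¹([0,H̄]) be positive and twice differentiable on (0,H̄], satisfying lim_{y→0+} ū′(y)/y = 0 and 0 ≤ (1/y)(ū′(y)/y)′ < ∞ for y ∈ (0,H̄]. Let ρ̄ > 0, Q = ρ̄ ∫₀^{H̄} y ū(y) dy, let 𝔥(z) ∈ [0,H̄] be defined by ρ̄ ∫₀^{𝔥(z)} y ū(y) dy = z, and B(z) = ū(𝔥(z))²/2 + h(ρ̄). Set κ₀ = sup_{y∈(0,H̄]} |ū″(y)| + sup_{y∈(0,H̄]} |(1/y)(ū′(y)/y)′|. Then for all z ∈ (0,Q]: 0 ≤ B′(z) ≤ κ₀/ρ̄ and 0 ≤ B″(z) ≤ κ₀ / (ρ̄² · inf_{y∈[0,H̄]} ū(y)). -/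

import Mathlib

open Set Real MeasureTheory

lemma aux_deriv_bound_right {f f' : ℝ → ℝ} {a b m M : ℝ} (hab : a < b)
    (hd : ∀ z ∈ Set.Ioc a b, HasDerivWithinAt f (f' z) (Set.Ioc a b) z)
    (hm : ∀ z ∈ Set.Ioo a b, m ≤ f' z) (hM : ∀ z ∈ Set.Ioo a b, f' z ≤ M) :
    m ≤ f' b ∧ f' b ≤ M := by
  have hb : b ∈ Set.Ioc a b := ⟨hab, le_refl b⟩
  have hslope : Filter.Tendsto (slope f b) (nhdsWithin b (Set.Ioc a b \ {b})) (nhds (f' b)) :=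
    hasDerivWithinAt_iff_tendsto_slope.1 (hd b hb)
  rw [Set.Ioc_sdiff_right] at hslope
  have hne : (nhdsWithin b (Set.Ioo a b)).NeBot := right_nhdsWithin_Ioo_neBot hab
  have key : ∀ y ∈ Set.Ioo a b, m ≤ slope f b y ∧ slope f b y ≤ M := by
    intro y hy
    have hyb : y < b := hy.2
    have hsub : Set.Icc y b ⊆ Set.Ioc a b := fun t ht => ⟨lt_of_lt_of_le hy.1 ht.1, ht.2⟩
    have hcont : ContinuousOn f (Set.Icc y b) := fun t ht =>
      ((hd t (hsub ht)).continuousWithinAt).mono hsub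
    have hderiv : ∀ t ∈ Set.Ioo y b, HasDerivAt f (f' t) t := by
      intro t ht
      have htmem : t ∈ Set.Ioo a b := ⟨lt_trans hy.1 ht.1, ht.2⟩
      exact (hd t ⟨htmem.1, htmem.2.le⟩).hasDerivAt
        (Filter.mem_of_superset (isOpen_Ioo.mem_nhds htmem) (fun s hs => ⟨hs.1, hs.2.le⟩))
    obtain ⟨c, hc, hceq⟩ := exists_hasDerivAt_eq_slope f f' hyb hcont hderiv
    have hcmem : c ∈ Set.Ioo a b := ⟨lt_trans hy.1 hc.1, hc.2⟩
    have hslope_eq : slope f b y = f' c := by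
      rw [slope_comm, slope_def_field, hceq]
    rw [hslope_eq]
    exact ⟨hm c hcmem, hM c hcmem⟩
  constructor
  · exact ge_of_tendsto hslope (eventually_mem_nhdsWithin.mono fun y hy => (key y hy).1)
  · exact le_of_tendsto hslope (eventually_mem_nhdsWithin.mono fun y hy => (key y hy).2)


/-- under the structure conditions on the upstream axial velocity `ū`
(`lim_{y→0+} ū′(y)/y = 0` and `0 ≤ (1/y)(ū′(y)/y)′ < ∞`), the Bernoulli function
`B(z) = ū(𝔥(z))²/2 + h(ρ̄)` satisfies, for `z ∈ (0,Q]`,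
`0 ≤ B′(z) ≤ κ₀/ρ̄` and `0 ≤ B″(z) ≤ κ₀/(ρ̄² inf ū)`, where
`κ₀ = sup |ū″| + sup (1/y)(ū′(y)/y)′`. -/
theorem stmt_7 (γ : ℝ) (hγ : 1 < γ)
    (H ρb : ℝ) (hH : 0 < H) (hρb : 0 < ρb)
    (u u' u'' w' : ℝ → ℝ)
    (hucont : ContinuousOn u (Icc 0 H))
    (hu : ∀ y ∈ Icc (0 : ℝ) H, HasDerivWithinAt u (u' y) (Icc 0 H) y)
    (hu'cont : ContinuousOn u' (Icc 0 H))
    (hupos : ∀ y ∈ Icc (0 : ℝ) H, 0 < u y)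
    (hu'' : ∀ y ∈ Ioc (0 : ℝ) H, HasDerivWithinAt u' (u'' y) (Ioc 0 H) y)
    (hw' : ∀ y ∈ Ioc (0 : ℝ) H, HasDerivWithinAt (fun s => u' s / s) (w' y) (Ioc 0 H) y)
    (hlim : Filter.Tendsto (fun y => u' y / y) (nhdsWithin 0 (Ioi 0)) (nhds 0))
    (hsign : ∀ y ∈ Ioc (0 : ℝ) H, 0 ≤ 1 / y * w' y)
    (hbdd1 : BddAbove ((fun y => |u'' y|) '' Ioc (0 : ℝ) H))
    (hbdd2 : BddAbove ((fun y => 1 / y * w' y) '' Ioc (0 : ℝ) H))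
    (κ : ℝ)
    (hκ : κ = sSup ((fun y => |u'' y|) '' Ioc (0 : ℝ) H)
        + sSup ((fun y => 1 / y * w' y) '' Ioc (0 : ℝ) H))
    (Q : ℝ) (hQ : Q = ρb * ∫ y in (0 : ℝ)..H, y * u y)
    (𝔥 : ℝ → ℝ)
    (h𝔥mem : ∀ z ∈ Icc (0 : ℝ) Q, 𝔥 z ∈ Icc (0 : ℝ) H)
    (h𝔥 : ∀ z ∈ Icc (0 : ℝ) Q, ρb * ∫ y in (0 : ℝ)..(𝔥 z), y * u y = z)
    (B : ℝ → ℝ) (hB : ∀ z : ℝ, B z = (u (𝔥 z)) ^ 2 / 2 + ρb ^ (γ - 1) / (γ - 1))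
    (B' B'' : ℝ → ℝ)
    (hB' : ∀ z ∈ Ioc (0 : ℝ) Q, HasDerivWithinAt B (B' z) (Ioc 0 Q) z)
    (hB'' : ∀ z ∈ Ioc (0 : ℝ) Q, HasDerivWithinAt B' (B'' z) (Ioc 0 Q) z) :
    ∀ z ∈ Ioc (0 : ℝ) Q,
      0 ≤ B' z ∧ B' z ≤ κ / ρb ∧
      0 ≤ B'' z ∧ B'' z ≤ κ / (ρb ^ 2 * sInf (u '' Icc (0 : ℝ) H)) := by
  intro z₀ hz₀
  have hQpos : 0 < Q := lt_of_lt_of_le hz₀.1 hz₀.2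
  -- the infimum of u
  set m0 : ℝ := sInf (u '' Icc (0 : ℝ) H) with hm0def
  have hm0pos : 0 < m0 := by
    obtain ⟨x₀, hx₀, heq⟩ := isCompact_Icc.exists_sInf_image_eq
      (Set.nonempty_Icc.2 hH.le) hucont
    rw [hm0def, heq]; exact hupos x₀ hx₀
  have hm0le : ∀ x ∈ Icc (0 : ℝ) H, m0 ≤ u x := fun x hx =>
    csInf_le (isCompact_Icc.bddBelow_image hucont) (mem_image_of_mem u hx)
  -- kappa pieces
  set K1 : ℝ := sSup ((fun y => |u'' y|) '' Ioc (0 : ℝ) H) with hK1def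
  set K2 : ℝ := sSup ((fun y => 1 / y * w' y) '' Ioc (0 : ℝ) H) with hK2def
  have hHmem : H ∈ Ioc (0 : ℝ) H := ⟨hH, le_refl H⟩
  have hK1le : ∀ y ∈ Ioc (0 : ℝ) H, |u'' y| ≤ K1 := fun y hy =>
    le_csSup hbdd1 ⟨y, hy, rfl⟩
  have hK2le : ∀ y ∈ Ioc (0 : ℝ) H, 1 / y * w' y ≤ K2 := fun y hy =>
    le_csSup hbdd2 ⟨y, hy, rfl⟩
  have hK1nonneg : 0 ≤ K1 := le_trans (abs_nonneg _) (hK1le H hHmem)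
  have hK2nonneg : 0 ≤ K2 := le_trans (hsign H hHmem) (hK2le H hHmem)
  have hK1κ : K1 ≤ κ := by rw [hκ]; linarith
  have hK2κ : K2 ≤ κ := by rw [hκ]; linarith
  have hκnonneg : 0 ≤ κ := by rw [hκ]; linarith
  -- continuous extension of u
  set ut : ℝ → ℝ := IccExtend hH.le ((Icc (0 : ℝ) H).restrict u) with hutdef
  have hutc : Continuous ut := hucont.restrict.Icc_extend'
  have hut_eq : ∀ x ∈ Icc (0 : ℝ) H, ut x = u x := fun x hx => by
    rw [hutdef, IccExtend_of_mem _ _ hx]; rfl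
  -- the flux function F and its properties
  have hgc : Continuous fun t : ℝ => t * ut t := continuous_id.mul hutc
  set G : ℝ → ℝ := fun x => ρb * ∫ t in (0 : ℝ)..x, t * ut t with hGdef
  have hGd : ∀ x : ℝ, HasDerivAt G (ρb * (x * ut x)) x := fun x =>
    (intervalIntegral.integral_hasDerivAt_right (hgc.intervalIntegrable _ _)
      (hgc.stronglyMeasurableAtFilter _ _) hgc.continuousAt).const_mul ρb
  set F : ℝ → ℝ := fun x => ρb * ∫ t in (0 : ℝ)..x, t * u t with hFdef
  have hFG : ∀ x ∈ Icc (0 : ℝ) H, F x = G x := by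
    intro x hx
    show ρb * (∫ t in (0 : ℝ)..x, t * u t) = ρb * ∫ t in (0 : ℝ)..x, t * ut t
    congr 1
    apply intervalIntegral.integral_congr
    intro t ht
    rw [uIcc_of_le hx.1] at ht
    show t * u t = t * ut t
    rw [hut_eq t ⟨ht.1, le_trans ht.2 hx.2⟩]
  have hGc : Continuous G := by
    apply continuous_iff_continuousAt.2
    exact fun x => (hGd x).continuousAt
  have hFcont : ContinuousOn F (Icc 0 H) := (hGc.continuousOn).congr hFG
  have hFderiv : ∀ x ∈ Ioo (0 : ℝ) H, HasDerivAt F (ρb * (x * u x)) x := by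
    intro x hx
    have hx' : x ∈ Icc (0 : ℝ) H := ⟨hx.1.le, hx.2.le⟩
    have h1 : HasDerivAt G (ρb * (x * u x)) x := by
      have := hGd x
      rwa [hut_eq x hx'] at this
    apply h1.congr_of_eventuallyEq
    exact Filter.eventuallyEq_of_mem (Icc_mem_nhds hx.1 hx.2) hFG
  have hFmono : StrictMonoOn F (Icc 0 H) := by
    apply strictMonoOn_of_deriv_pos (convex_Icc _ _) hFcont
    intro x hx
    rw [interior_Icc] at hx
    rw [(hFderiv x hx).deriv]
    have := hupos x ⟨hx.1.le, hx.2.le⟩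
    exact mul_pos hρb (mul_pos hx.1 this)
  have hF0 : F 0 = 0 := by rw [hFdef]; simp
  have hFH : F H = Q := hQ.symm
  have h𝔥F : ∀ z ∈ Icc (0 : ℝ) Q, F (𝔥 z) = z := h𝔥
  -- 𝔥 is the inverse of F
  have hFrange : ∀ x ∈ Icc (0 : ℝ) H, F x ∈ Icc (0 : ℝ) Q := by
    intro x hx
    constructor
    · rw [← hF0]
      exact hFmono.monotoneOn (left_mem_Icc.2 hH.le) hx hx.1
    · rw [← hFH]
      exact hFmono.monotoneOn hx (right_mem_Icc.2 hH.le) hx.2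
  have h𝔥inv : ∀ x ∈ Icc (0 : ℝ) H, 𝔥 (F x) = x := by
    intro x hx
    have h1 : F x ∈ Icc (0 : ℝ) Q := hFrange x hx
    exact hFmono.injOn (h𝔥mem _ h1) hx (h𝔥F _ h1)
  have h𝔥mono : StrictMonoOn 𝔥 (Icc 0 Q) := by
    intro z1 hz1 z2 hz2 hlt
    by_contra hcon
    push_neg at hcon
    have := hFmono.monotoneOn (h𝔥mem z2 hz2) (h𝔥mem z1 hz1) hcon
    rw [h𝔥F z1 hz1, h𝔥F z2 hz2] at this
    exact absurd hlt (not_lt.2 this)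
  have h𝔥0 : 𝔥 0 = 0 := by
    have := h𝔥inv 0 (left_mem_Icc.2 hH.le)
    rwa [hF0] at this
  have h𝔥Q : 𝔥 Q = H := by
    have := h𝔥inv H (right_mem_Icc.2 hH.le)
    rwa [hFH] at this
  have h𝔥image : 𝔥 '' Icc (0 : ℝ) Q = Icc (0 : ℝ) H := by
    apply Subset.antisymm
    · rintro _ ⟨w, hw, rfl⟩; exact h𝔥mem w hw
    · intro x hx
      exact ⟨F x, hFrange x hx, h𝔥inv x hx⟩
  have h𝔥Ioo : ∀ z ∈ Ioo (0 : ℝ) Q, 𝔥 z ∈ Ioo (0 : ℝ) H := by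
    intro z hz
    constructor
    · rw [← h𝔥0]
      exact h𝔥mono (left_mem_Icc.2 hQpos.le) ⟨hz.1.le, hz.2.le⟩ hz.1
    · rw [← h𝔥Q]
      exact h𝔥mono ⟨hz.1.le, hz.2.le⟩ (right_mem_Icc.2 hQpos.le) hz.2
  have h𝔥deriv : ∀ z ∈ Ioo (0 : ℝ) Q, HasDerivAt 𝔥 ((ρb * (𝔥 z * u (𝔥 z)))⁻¹) z := by
    intro z hz
    have hx : 𝔥 z ∈ Ioo (0 : ℝ) H := h𝔥Ioo z hz
    have hcont : ContinuousAt 𝔥 z := by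
      apply h𝔥mono.continuousAt_of_image_mem_nhds (Icc_mem_nhds hz.1 hz.2)
      rw [h𝔥image]
      exact Icc_mem_nhds hx.1 hx.2
    have hupos' : 0 < u (𝔥 z) := hupos _ ⟨hx.1.le, hx.2.le⟩
    have hne : ρb * (𝔥 z * u (𝔥 z)) ≠ 0 :=
      ne_of_gt (mul_pos hρb (mul_pos hx.1 hupos'))
    exact HasDerivAt.of_local_left_inverse hcont (hFderiv (𝔥 z) hx) hne
      (Filter.eventually_of_mem (Icc_mem_nhds hz.1 hz.2) h𝔥F)
  -- u' tends to 0 at 0+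
  have hu'0 : Filter.Tendsto u' (nhdsWithin 0 (Ioi 0)) (nhds 0) := by
    have h2 : Filter.Tendsto (fun y : ℝ => y) (nhdsWithin 0 (Ioi 0)) (nhds 0) :=
      Filter.tendsto_id.mono_left nhdsWithin_le_nhds
    have h1 : Filter.Tendsto (fun y : ℝ => (u' y / y) * y) (nhdsWithin 0 (Ioi 0)) (nhds 0) := by
      have := hlim.mul h2
      simpa using this
    refine Filter.Tendsto.congr' ?_ h1
    filter_upwards [eventually_mem_nhdsWithin] with y hy
    exact div_mul_cancel₀ _ (ne_of_gt hy)
  -- bound u' x ≤ K1 * x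
  have hu'le : ∀ x ∈ Ioc (0 : ℝ) H, u' x ≤ K1 * x := by
    intro x hx
    have hkey : ∀ ε ∈ Ioo (0 : ℝ) x, u' x - K1 * x ≤ u' ε := by
      intro ε hε
      have hsub : Icc ε x ⊆ Icc (0 : ℝ) H := fun t ht =>
        ⟨le_trans hε.1.le ht.1, le_trans ht.2 hx.2⟩
      have hcont : ContinuousOn u' (Icc ε x) := hu'cont.mono hsub
      have hderiv : ∀ t ∈ Ioo ε x, HasDerivAt u' (u'' t) t := by
        intro t ht
        have htmem : t ∈ Ioo (0 : ℝ) H := ⟨lt_trans hε.1 ht.1, lt_of_lt_of_le ht.2 hx.2⟩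
        exact (hu'' t ⟨htmem.1, htmem.2.le⟩).hasDerivAt
          (Filter.mem_of_superset (isOpen_Ioo.mem_nhds htmem) (fun s hs => ⟨hs.1, hs.2.le⟩))
      obtain ⟨c, hc, hceq⟩ := exists_hasDerivAt_eq_slope u' u'' hε.2 hcont hderiv
      have hcmem : c ∈ Ioc (0 : ℝ) H := ⟨lt_trans hε.1 hc.1, le_trans hc.2.le hx.2⟩
      have hxε : (0:ℝ) < x - ε := by linarith [hε.2]
      have h1 : u' x - u' ε = u'' c * (x - ε) := by
        rw [hceq]; field_simp
      have hK1c : u'' c ≤ K1 := le_trans (le_abs_self _) (hK1le c hcmem)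
      nlinarith [mul_le_mul_of_nonneg_right hK1c hxε.le, mul_nonneg hK1nonneg hε.1.le]
    have hfin : u' x - K1 * x ≤ 0 := by
      refine ge_of_tendsto hu'0 ?_
      filter_upwards [Ioo_mem_nhdsGT_of_mem ⟨le_refl (0:ℝ), hx.1⟩] with ε hε
      exact hkey ε hε
    linarith
  -- nonnegativity of w' and monotonicity of u'/y
  have hw'nonneg : ∀ y ∈ Ioc (0 : ℝ) H, 0 ≤ w' y := by
    intro y hy
    have h1 := hsign y hy
    have h2 : (0:ℝ) < 1 / y := one_div_pos.mpr hy.1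
    by_contra hcon
    push_neg at hcon
    exact absurd h1 (not_le.2 (mul_neg_of_pos_of_neg h2 hcon))
  have hvmono : MonotoneOn (fun y => u' y / y) (Ioc (0 : ℝ) H) := by
    have hint : interior (Ioc (0:ℝ) H) = Ioo 0 H := interior_Ioc
    apply monotoneOn_of_deriv_nonneg (convex_Ioc _ _)
    · exact fun y hy => (hw' y hy).continuousWithinAt
    · rw [hint]
      intro y hy
      exact ((hw' y ⟨hy.1, hy.2.le⟩).hasDerivAt
        (Filter.mem_of_superset (isOpen_Ioo.mem_nhds hy)
          (fun s hs => ⟨hs.1, hs.2.le⟩))).differentiableAt.differentiableWithinAt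
    · rw [hint]
      intro y hy
      rw [((hw' y ⟨hy.1, hy.2.le⟩).hasDerivAt
        (Filter.mem_of_superset (isOpen_Ioo.mem_nhds hy)
          (fun s hs => ⟨hs.1, hs.2.le⟩))).deriv]
      exact hw'nonneg y ⟨hy.1, hy.2.le⟩
  have hvnonneg : ∀ x ∈ Ioc (0 : ℝ) H, 0 ≤ u' x / x := by
    intro x hx
    refine le_of_tendsto hlim ?_
    filter_upwards [Ioo_mem_nhdsGT_of_mem ⟨le_refl (0:ℝ), hx.1⟩] with ε hε
    exact hvmono ⟨hε.1, le_trans hε.2.le hx.2⟩ hx hε.2.le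
  -- formula for B' on the interior
  have hB'eq : ∀ z ∈ Ioo (0 : ℝ) Q, B' z = u' (𝔥 z) / (ρb * 𝔥 z) := by
    intro z hz
    have hx : 𝔥 z ∈ Ioo (0 : ℝ) H := h𝔥Ioo z hz
    have hxIcc : 𝔥 z ∈ Icc (0 : ℝ) H := ⟨hx.1.le, hx.2.le⟩
    have hux : 0 < u (𝔥 z) := hupos _ hxIcc
    have hu_at : HasDerivAt u (u' (𝔥 z)) (𝔥 z) :=
      (hu _ hxIcc).hasDerivAt (Icc_mem_nhds hx.1 hx.2)
    have hcomp : HasDerivAt (fun w => u (𝔥 w)) (u' (𝔥 z) * (ρb * (𝔥 z * u (𝔥 z)))⁻¹) z :=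
      hu_at.comp z (h𝔥deriv z hz)
    have hBfun : B = fun w => u (𝔥 w) ^ 2 / 2 + ρb ^ (γ - 1) / (γ - 1) := funext hB
    have hBd := ((hcomp.pow 2).div_const 2).add_const (ρb ^ (γ - 1) / (γ - 1))
    rw [show (fun x => ((fun w => u (𝔥 w)) ^ 2) x / 2 + ρb ^ (γ - 1) / (γ - 1)) = B from by rw [hBfun]; rfl] at hBd
    have hBz : HasDerivAt B (B' z) z :=
      (hB' z ⟨hz.1, hz.2.le⟩).hasDerivAt
        (Filter.mem_of_superset (isOpen_Ioo.mem_nhds hz) (fun s hs => ⟨hs.1, hs.2.le⟩))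
    rw [hBz.unique hBd]
    have hxne : 𝔥 z ≠ 0 := ne_of_gt hx.1
    have huxne : u (𝔥 z) ≠ 0 := ne_of_gt hux
    field_simp
    ring
  -- bounds for B' on the interior
  have hB'lower : ∀ z ∈ Ioo (0 : ℝ) Q, 0 ≤ B' z := by
    intro z hz
    rw [hB'eq z hz]
    have hx : 𝔥 z ∈ Ioo (0 : ℝ) H := h𝔥Ioo z hz
    have h1 : 0 ≤ u' (𝔥 z) / 𝔥 z := hvnonneg _ ⟨hx.1, hx.2.le⟩
    have h2 : u' (𝔥 z) / (ρb * 𝔥 z) = (u' (𝔥 z) / 𝔥 z) / ρb := by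
      ring
    rw [h2]
    exact div_nonneg h1 hρb.le
  have hB'upper : ∀ z ∈ Ioo (0 : ℝ) Q, B' z ≤ κ / ρb := by
    intro z hz
    rw [hB'eq z hz]
    have hx : 𝔥 z ∈ Ioo (0 : ℝ) H := h𝔥Ioo z hz
    have h1 : u' (𝔥 z) / 𝔥 z ≤ K1 :=
      (div_le_iff₀ hx.1).2 (hu'le _ ⟨hx.1, hx.2.le⟩)
    have h2 : u' (𝔥 z) / (ρb * 𝔥 z) = (u' (𝔥 z) / 𝔥 z) / ρb := by
      ring
    rw [h2]
    exact (div_le_div_iff_of_pos_right hρb).2 (le_trans h1 hK1κ)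
  -- formula for B'' on the interior
  have hB''eq : ∀ z ∈ Ioo (0 : ℝ) Q,
      B'' z = (1 / 𝔥 z * w' (𝔥 z)) / (ρb ^ 2 * u (𝔥 z)) := by
    intro z hz
    have hx : 𝔥 z ∈ Ioo (0 : ℝ) H := h𝔥Ioo z hz
    have hxIcc : 𝔥 z ∈ Icc (0 : ℝ) H := ⟨hx.1.le, hx.2.le⟩
    have hux : 0 < u (𝔥 z) := hupos _ hxIcc
    have hv_at : HasDerivAt (fun s => u' s / s) (w' (𝔥 z)) (𝔥 z) :=
      (hw' _ ⟨hx.1, hx.2.le⟩).hasDerivAt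
        (Filter.mem_of_superset (isOpen_Ioo.mem_nhds hx) (fun s hs => ⟨hs.1, hs.2.le⟩))
    have hcomp : HasDerivAt (fun w => u' (𝔥 w) / 𝔥 w)
        (w' (𝔥 z) * (ρb * (𝔥 z * u (𝔥 z)))⁻¹) z := hv_at.comp z (h𝔥deriv z hz)
    have hg : HasDerivAt (fun w => u' (𝔥 w) / (ρb * 𝔥 w))
        (w' (𝔥 z) * (ρb * (𝔥 z * u (𝔥 z)))⁻¹ / ρb) z := by
      have h1 := hcomp.div_const ρb
      have h2 : (fun w => u' (𝔥 w) / 𝔥 w / ρb) = fun w => u' (𝔥 w) / (ρb * 𝔥 w) := by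
        funext w; rw [div_div, mul_comm]
      rwa [h2] at h1
    have hBd : HasDerivAt B' (w' (𝔥 z) * (ρb * (𝔥 z * u (𝔥 z)))⁻¹ / ρb) z := by
      apply hg.congr_of_eventuallyEq
      filter_upwards [isOpen_Ioo.mem_nhds hz] with w hw
      exact hB'eq w hw
    have hBz : HasDerivAt B' (B'' z) z :=
      (hB'' z ⟨hz.1, hz.2.le⟩).hasDerivAt
        (Filter.mem_of_superset (isOpen_Ioo.mem_nhds hz) (fun s hs => ⟨hs.1, hs.2.le⟩))
    rw [hBz.unique hBd]
    have hxne : 𝔥 z ≠ 0 := ne_of_gt hx.1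
    have huxne : u (𝔥 z) ≠ 0 := ne_of_gt hux
    field_simp
    try tauto
  -- bounds for B'' on the interior
  have hB''lower : ∀ z ∈ Ioo (0 : ℝ) Q, 0 ≤ B'' z := by
    intro z hz
    rw [hB''eq z hz]
    have hx : 𝔥 z ∈ Ioo (0 : ℝ) H := h𝔥Ioo z hz
    have hux : 0 < u (𝔥 z) := hupos _ ⟨hx.1.le, hx.2.le⟩
    exact div_nonneg (hsign _ ⟨hx.1, hx.2.le⟩)
      (mul_nonneg (pow_nonneg hρb.le 2) hux.le)
  have hB''upper : ∀ z ∈ Ioo (0 : ℝ) Q, B'' z ≤ κ / (ρb ^ 2 * m0) := by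
    intro z hz
    rw [hB''eq z hz]
    have hx : 𝔥 z ∈ Ioo (0 : ℝ) H := h𝔥Ioo z hz
    have hux0 : 0 < u (𝔥 z) := hupos _ ⟨hx.1.le, hx.2.le⟩
    have hux : m0 ≤ u (𝔥 z) := hm0le _ ⟨hx.1.le, hx.2.le⟩
    have h1 : 1 / 𝔥 z * w' (𝔥 z) ≤ κ := le_trans (hK2le _ ⟨hx.1, hx.2.le⟩) hK2κ
    have h2 : ρb ^ 2 * m0 ≤ ρb ^ 2 * u (𝔥 z) :=
      mul_le_mul_of_nonneg_left hux (pow_nonneg hρb.le 2)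
    calc (1 / 𝔥 z * w' (𝔥 z)) / (ρb ^ 2 * u (𝔥 z))
        ≤ κ / (ρb ^ 2 * u (𝔥 z)) :=
          (div_le_div_iff_of_pos_right (mul_pos (pow_pos hρb 2) hux0)).2 h1
      _ ≤ κ / (ρb ^ 2 * m0) :=
          div_le_div_of_nonneg_left hκnonneg (mul_pos (pow_pos hρb 2) hm0pos) h2
  -- conclude
  rcases eq_or_lt_of_le hz₀.2 with heq | hlt
  · have h1 := aux_deriv_bound_right hQpos hB' hB'lower hB'upper
    have h2 := aux_deriv_bound_right hQpos hB'' hB''lower hB''upper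
    rw [heq]
    exact ⟨h1.1, h1.2, h2.1, h2.2⟩
  · exact ⟨hB'lower z₀ ⟨hz₀.1, hlt⟩, hB'upper z₀ ⟨hz₀.1, hlt⟩,
      hB''lower z₀ ⟨hz₀.1, hlt⟩, hB''upper z₀ ⟨hz₀.1, hlt⟩⟩
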